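/- Splitting theorem: every almost ι-complex A is locally equivalent to a direct sum C ⊕ A', where C is the standard complex in the local equivalence class of A and A' is a complex all of whose homology is U-torsion. Concretely, if f : C → A and g : A → C are local maps, then g∘f is an isomorphism and the short exact sequence 0 → C → A → A/im f → 0 splits. -/

import Mathlib

open Polynomial

abbrev F2 : Type := ZMod 2
abbrev R : Type := Polynomial F2

noncomputable section

namespace AI

/-- The variable `U`. -/
def Uu : R := Polynomial.X

/-- The free `R`-module of rank `n`. -/
abbrev V (n : ℕ) : Type := Fin n → R

/-- The `i`-th standard basis vector. -/
def e {n : ℕ} (i : Fin n) : V n := fun j => if j = i then 1 else 0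

/-- The `i`-th standard basis vector over `F2`. -/
def e2 {n : ℕ} (i : Fin n) : Fin n → F2 := fun j => if j = i then 1 else 0

/-- `x` lies in the image of multiplication by `U`. -/
def modU {n : ℕ} (x : V n) : Prop := ∀ j, (x j).coeff 0 = 0

/-- `x` is homogeneous of degree `c` with respect to the generator gradings `gr`
(where `deg U = -2`). -/
def IsHomog {n : ℕ} (gr : Fin n → ℤ) (c : ℤ) (x : V n) : Prop :=
  ∀ (j : Fin n) (m : ℕ), (x j).coeff m ≠ 0 → gr j - 2 * (m : ℤ) = c

/-- `f` is a graded `R`-linear map of degree `dg`. -/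
def GradedMap {m n : ℕ} (gr₁ : Fin m → ℤ) (gr₂ : Fin n → ℤ) (dg : ℤ)
    (f : V m →ₗ[R] V n) : Prop :=
  ∀ i : Fin m, IsHomog gr₂ (gr₁ i + dg) (f (e i))

/-- The raw data of a free finitely generated `ℤ`-graded complex over `R = F[U]`. -/
structure PreCplx where
  n : ℕ
  gr : Fin n → ℤ
  d : V n →ₗ[R] V n

def IsCycle (C : PreCplx) (x : V C.n) : Prop := C.d x = 0

def IsBdry (C : PreCplx) (x : V C.n) : Prop := ∃ y, C.d y = x

/-- `x` is a cycle representing a `U`-nontorsion homology class. -/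
def NontorsionClass (C : PreCplx) (x : V C.n) : Prop :=
  IsCycle C x ∧ ∀ k : ℕ, ¬ IsBdry C ((Uu ^ k) • x)

/-- `U⁻¹H_*(C) ≅ F[U, U⁻¹]`, generated by a degree-zero cycle (normalization
convention: the maximal degree of a `U`-nontorsion cycle class is zero, so the
localized homology is supported in even degrees). -/
def HtowerCond (C : PreCplx) : Prop :=
  ∃ x : V C.n, IsCycle C x ∧ IsHomog C.gr 0 x ∧
    (∀ k : ℕ, ¬ IsBdry C ((Uu ^ k) • x)) ∧
    (∀ y : V C.n, IsCycle C y →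
      ∃ (k : ℕ) (p : R) (z : V C.n), (Uu ^ k) • y = p • x + C.d z)

/-- `C` is a genuine graded chain complex. -/
def IsCplx (C : PreCplx) : Prop :=
  GradedMap C.gr C.gr (-1) C.d ∧ C.d ∘ₗ C.d = 0

/-- `f` and `g` are homotopic mod `U`. -/
def HomotopicModU (C₁ C₂ : PreCplx) (f g : V C₁.n →ₗ[R] V C₂.n) : Prop :=
  ∃ H : V C₁.n →ₗ[R] V C₂.n, GradedMap C₁.gr C₂.gr 1 H ∧
    ∀ x, modU ((f + g + H ∘ₗ C₁.d + C₂.d ∘ₗ H) x)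

/-- The raw data of an almost ι-complex. -/
structure PreAI extends PreCplx where
  ι : V n →ₗ[R] V n

/-- `ω = 1 + ι`. -/
def omega (C : PreAI) : V C.n →ₗ[R] V C.n := LinearMap.id + C.ι

/-- `C` is an almost ι-complex. -/
def IsAICplx (C : PreAI) : Prop :=
  IsCplx C.toPreCplx ∧
  GradedMap C.gr C.gr 0 C.ι ∧
  (∀ x, modU ((C.ι ∘ₗ C.d + C.d ∘ₗ C.ι) x)) ∧
  HomotopicModU C.toPreCplx C.toPreCplx (C.ι ∘ₗ C.ι) LinearMap.id ∧
  HtowerCond C.toPreCplx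

/-- `C` is a genuine ι-complex: `ι` is an honest chain map whose square is
genuinely chain homotopic to the identity. -/
def IsIotaCplx (C : PreAI) : Prop :=
  IsCplx C.toPreCplx ∧
  GradedMap C.gr C.gr 0 C.ι ∧
  C.ι ∘ₗ C.d = C.d ∘ₗ C.ι ∧
  (∃ H : V C.n →ₗ[R] V C.n, GradedMap C.gr C.gr 1 H ∧
    C.ι ∘ₗ C.ι + LinearMap.id = H ∘ₗ C.d + C.d ∘ₗ H) ∧
  HtowerCond C.toPreCplx

/-- A reduced complex: the differential vanishes mod `U`. -/
def Reduced (C : PreAI) : Prop := ∀ x, modU (C.d x)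

/-- `f` is an almost ι-morphism. -/
def isAIMorphism (C₁ C₂ : PreAI) (f : V C₁.n →ₗ[R] V C₂.n) : Prop :=
  GradedMap C₁.gr C₂.gr 0 f ∧
  f ∘ₗ C₁.d = C₂.d ∘ₗ f ∧
  HomotopicModU C₁.toPreCplx C₂.toPreCplx (f ∘ₗ C₁.ι) (C₂.ι ∘ₗ f)

/-- A local map: an almost ι-morphism inducing an isomorphism on `U`-localized
homology (equivalently, with the normalization conventions in force, preserving
`U`-nontorsion cycle classes). -/
def isLocalMap (C₁ C₂ : PreAI) (f : V C₁.n →ₗ[R] V C₂.n) : Prop :=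
  isAIMorphism C₁ C₂ f ∧
  ∀ x, NontorsionClass C₁.toPreCplx x → NontorsionClass C₂.toPreCplx (f x)

/-- Local equivalence of almost ι-complexes. -/
def LocallyEquiv (C₁ C₂ : PreAI) : Prop :=
  (∃ f, isLocalMap C₁ C₂ f) ∧ (∃ g, isLocalMap C₂ C₁ g)

/-- The tensor product (over `R`) of linear maps between free modules,
in the bases indexed by `finProdFinEquiv`. -/
def tmap {m n m' n' : ℕ} (f : V m →ₗ[R] V m') (g : V n →ₗ[R] V n') :
    V (m * n) →ₗ[R] V (m' * n') where
  toFun x := fun p => ∑ q : Fin (m * n),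
    x q * f (e (finProdFinEquiv.symm q).1) (finProdFinEquiv.symm p).1
        * g (e (finProdFinEquiv.symm q).2) (finProdFinEquiv.symm p).2
  map_add' x y := by
    funext p
    simp [Pi.add_apply, add_mul, Finset.sum_add_distrib]
  map_smul' c x := by
    funext p
    simp only [RingHom.id_apply, Pi.smul_apply, smul_eq_mul, Finset.mul_sum]
    exact Finset.sum_congr rfl fun q _ => by ring

/-- The tensor product of complexes. -/
def tensorPre (C₁ C₂ : PreCplx) : PreCplx where
  n := C₁.n * C₂.n
  gr := fun q => C₁.gr (finProdFinEquiv.symm q).1 + C₂.gr (finProdFinEquiv.symm q).2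
  d := tmap C₁.d LinearMap.id + tmap LinearMap.id C₂.d

/-- The tensor product of almost ι-complexes. -/
def tensorAI (C₁ C₂ : PreAI) : PreAI where
  toPreCplx := tensorPre C₁.toPreCplx C₂.toPreCplx
  ι := tmap C₁.ι C₂.ι

/-- The transpose of a square matrix map (the dual map in the dual basis). -/
def tr {n : ℕ} (f : V n →ₗ[R] V n) : V n →ₗ[R] V n where
  toFun x := fun j => ∑ i : Fin n, x i * f (e j) i
  map_add' x y := by
    funext j
    simp [Pi.add_apply, add_mul, Finset.sum_add_distrib]
  map_smul' c x := by
    funext j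
    simp only [RingHom.id_apply, Pi.smul_apply, smul_eq_mul, Finset.mul_sum]
    exact Finset.sum_congr rfl fun i _ => by ring

/-- The dual complex. -/
def dualPre (C : PreCplx) : PreCplx where
  n := C.n
  gr := fun i => -C.gr i
  d := tr C.d

/-- The dual almost ι-complex. -/
def dualAI (C : PreAI) : PreAI where
  toPreCplx := dualPre C.toPreCplx
  ι := tr C.ι

/-- The trivial complex `C(0) = (F[U], ∂ = 0, ι = id)`. -/
def cZero : PreAI := ⟨⟨1, fun _ => 0, 0⟩, LinearMap.id⟩

/-- The contraction map `C ⊗ C^∨ → F[U]`, `x ⊗ y ↦ y(x)`. -/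
def contr (n : ℕ) : V (n * n) →ₗ[R] V 1 where
  toFun x := fun _ => ∑ i : Fin n, x (finProdFinEquiv (i, i))
  map_add' x y := by funext j; simp [Pi.add_apply, Finset.sum_add_distrib]
  map_smul' c x := by
    funext j
    simp only [RingHom.id_apply, Pi.smul_apply, smul_eq_mul, Finset.mul_sum]

/-! ### Standard and augmented complexes -/

/-- The `i`-th symbol (0-indexed) of the parameter sequence, padded by zeros. -/
def seqAt (M : List ℤ) (i : ℕ) : ℤ := M.getD i 0

/-- Grading step of a `b`-arrow. -/
def bstep (b : ℤ) : ℤ := (if 0 < b then 1 else -1) - 2 * b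

/-- Grading of the generator `T_i` of the standard/augmented complex. -/
def stdGr (M : List ℤ) (i : ℕ) : ℤ :=
  ∑ s ∈ Finset.range i, if s % 2 = 1 then bstep (seqAt M s) else 0

/-- A linear endomorphism of `V n` given by a matrix of coefficients. -/
def ofMatrix {n : ℕ} (c : ℕ → ℕ → R) : V n →ₗ[R] V n where
  toFun x := fun j => ∑ i : Fin n, x i * c i j
  map_add' x y := by
    funext j
    simp [Pi.add_apply, add_mul, Finset.sum_add_distrib]
  map_smul' r x := by
    funext j
    simp only [RingHom.id_apply, Pi.smul_apply, smul_eq_mul, Finset.mul_sum]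
    exact Finset.sum_congr rfl fun i _ => by ring

/-- Matrix of the differential of the standard/augmented complex: the `b`-symbol
at (0-indexed) odd position `s` of `M` relates `T_s` and `T_{s+1}`. -/
def dCoef (M : List ℤ) (i j : ℕ) : R :=
  if i % 2 = 1 ∧ seqAt M i < 0 ∧ j = i + 1 then Uu ^ (seqAt M i).natAbs
  else if i % 2 = 0 ∧ 0 < i ∧ 0 < seqAt M (i - 1) ∧ j + 1 = i then
    Uu ^ (seqAt M (i - 1)).natAbs
  else 0

/-- Matrix of `ω = 1 + ι` on the standard/augmented complex: the `a`-symbol at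
(0-indexed) even position `s` of `M` relates `T_s` and `T_{s+1}`. -/
def wCoef (M : List ℤ) (i j : ℕ) : R :=
  if i % 2 = 0 ∧ seqAt M i = -1 ∧ j = i + 1 then 1
  else if i % 2 = 1 ∧ seqAt M (i - 1) = 1 ∧ j + 1 = i then 1
  else 0

/-- Matrix of `ι = 1 + ω` (char 2). -/
def iCoef (M : List ℤ) (i j : ℕ) : R :=
  (if i = j then 1 else 0) + wCoef M i j

/-- The standard (even length) or augmented (odd length) complex on generators
`T_0, …, T_{M.length}` determined by the symbol sequence `M`. -/
def symCplx (M : List ℤ) : PreAI :=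
  ⟨⟨M.length + 1, fun i => stdGr M i, ofMatrix (dCoef M)⟩, ofMatrix (iCoef M)⟩

/-- Validity of a standard parameter sequence. -/
def StdParams (M : List ℤ) : Prop :=
  M.length % 2 = 0 ∧
  ∀ i < M.length, if i % 2 = 0 then seqAt M i = 1 ∨ seqAt M i = -1 else seqAt M i ≠ 0

/-- Validity of an augmented parameter sequence. -/
def AugParams (M : List ℤ) : Prop :=
  M.length % 2 = 1 ∧
  ∀ i < M.length, if i % 2 = 0 then seqAt M i = 1 ∨ seqAt M i = -1 else seqAt M i ≠ 0

/-- The modified order `<!` on `ℤ`: `−1 <! −2 <! ⋯ <! 0 <! ⋯ <! 2 <! 1`. -/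
def ltB (x y : ℤ) : Prop :=
  (x < 0 ∧ 0 ≤ y) ∨ (x ≤ 0 ∧ 0 < y) ∨ (x < 0 ∧ y < 0 ∧ y < x) ∨ (0 < x ∧ 0 < y ∧ y < x)

def leB (x y : ℤ) : Prop := ltB x y ∨ x = y

/-- Strict lexicographic order on (zero-padded) parameter sequences. -/
def lexLt (M M' : List ℤ) : Prop :=
  ∃ k : ℕ, (∀ i < k, seqAt M i = seqAt M' i) ∧ ltB (seqAt M k) (seqAt M' k)

def lexLe (M M' : List ℤ) : Prop := lexLt M M' ∨ ∀ i, seqAt M i = seqAt M' i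

/-- A short map from the standard (even `M.length`) or augmented (odd `M.length`)
complex determined by `M` to `A`: the `ω`-condition (standard case) resp. the
`∂`-condition (augmented case) is waived on the final generator. -/
def isShortMap (M : List ℤ) (A : PreAI) (f : V (M.length + 1) →ₗ[R] V A.n) : Prop :=
  GradedMap (symCplx M).gr A.gr 0 f ∧
  (∀ i : Fin (M.length + 1), ((i : ℕ) < M.length ∨ M.length % 2 = 0) →
    A.d (f (e i)) = f ((symCplx M).d (e i))) ∧
  (∀ i : Fin (M.length + 1), ((i : ℕ) < M.length ∨ M.length % 2 = 1) →
    modU ((omega A) (f (e i)) + f ((omega (symCplx M)) (e i))))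

/-- A local short map: `T_0` goes to a `U`-nontorsion cycle class. -/
def isLocalShortMap (M : List ℤ) (A : PreAI) (f : V (M.length + 1) →ₗ[R] V A.n) : Prop :=
  isShortMap M A f ∧ NontorsionClass A.toPreCplx (f (e ⟨0, Nat.succ_pos _⟩))

/-- The sequence of invariants `s_i(A)` (1-indexed in the paper; 0-indexed here):
`s k` is the `≤!`-maximum of the `(k+1)`-st symbols among standard complexes
locally mapping to `A` whose first `k` symbols are `s 0, …, s (k-1)`. -/
def IsInvariantSeq (A : PreAI) (s : ℕ → ℤ) : Prop :=
  ∀ k : ℕ,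
    (∃ M : List ℤ, StdParams M ∧ (∃ f, isLocalMap (symCplx M) A f) ∧
      ∀ i ≤ k, seqAt M i = s i) ∧
    (∀ M : List ℤ, StdParams M → (∃ f, isLocalMap (symCplx M) A f) →
      (∀ i < k, seqAt M i = s i) → leB (seqAt M k) (s k))

/-- Reduction mod `U` of a linear map, as an `F₂`-linear map. -/
def mapHat {m n : ℕ} (f : V m →ₗ[R] V n) : (Fin m → F2) →ₗ[F2] (Fin n → F2) where
  toFun x := fun j => ∑ i : Fin m, x i * (f (e i) j).coeff 0
  map_add' x y := by
    funext j
    simp [Pi.add_apply, add_mul, Finset.sum_add_distrib]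
  map_smul' c x := by
    funext j
    simp only [RingHom.id_apply, Pi.smul_apply, smul_eq_mul, Finset.mul_sum]
    exact Finset.sum_congr rfl fun i _ => by ring

/-- The induced action `ω̂` on `C/U`. -/
def wHat (C : PreAI) : (Fin C.n → F2) →ₗ[F2] (Fin C.n → F2) := mapHat (omega C)

end AI

namespace AI

/-! ### Auxiliary machinery for the splitting theorem -/

section SplittingAux

open Finset

/-- Expansion of a vector in the standard basis, applied through a linear map. -/
lemma map_apply_sum {a b : ℕ} (ψ : V a →ₗ[R] V b) (x : V a) (j : Fin b) :
    ψ x j = ∑ l, x l * ψ (e l) j := by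
  have hx : x = ∑ l, x l • e l := by
    funext i
    rw [Finset.sum_apply]
    simp only [Pi.smul_apply, e, smul_eq_mul, mul_ite, mul_one, mul_zero]
    rw [Finset.sum_ite_eq Finset.univ i (fun l => x l)]
    simp
  conv_lhs => rw [hx, map_sum]
  rw [Finset.sum_apply]
  exact Finset.sum_congr rfl fun l _ => by rw [map_smul]; simp

lemma ofMatrix_apply {k : ℕ} (c : ℕ → ℕ → R) (x : V k) (j : Fin k) :
    (ofMatrix c x) j = ∑ l, x l * c ↑l ↑j := rfl

lemma ofMatrix_e {k : ℕ} (c : ℕ → ℕ → R) (i j : Fin k) :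
    (ofMatrix c (e i)) j = c ↑i ↑j := by
  rw [ofMatrix_apply]
  rw [Fintype.sum_eq_single i (fun l hl => ?_)]
  · simp [e]
  · simp [e, if_neg hl]

/-- modU is preserved by linear maps. -/
lemma modU_map {a b : ℕ} (ψ : V a →ₗ[R] V b) {x : V a} (h : modU x) : modU (ψ x) := by
  intro j
  rw [map_apply_sum]
  rw [Polynomial.finset_sum_coeff]
  exact Finset.sum_eq_zero fun l _ => by rw [Polynomial.mul_coeff_zero, h l, zero_mul]

lemma modU_add {a : ℕ} {x y : V a} (hx : modU x) (hy : modU y) : modU (x + y) := by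
  intro j
  simp [Polynomial.coeff_add, hx j, hy j]

/-- Homogeneity is preserved by graded maps. -/
lemma homog_map {a b : ℕ} {gr2 : Fin a → ℤ} {gr3 : Fin b → ℤ} {dg : ℤ}
    (ψ : V a →ₗ[R] V b) (hψ : GradedMap gr2 gr3 dg ψ) {c : ℤ} {x : V a}
    (hx : IsHomog gr2 c x) : IsHomog gr3 (c + dg) (ψ x) := by
  intro j mm hc
  rw [map_apply_sum, Polynomial.finset_sum_coeff] at hc
  obtain ⟨l, -, hl⟩ := Finset.exists_ne_zero_of_sum_ne_zero hc
  rw [Polynomial.coeff_mul] at hl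
  obtain ⟨⟨m1, m2⟩, hmem, hne⟩ := Finset.exists_ne_zero_of_sum_ne_zero hl
  have h1 := hx l m1 (left_ne_zero_of_mul hne)
  have h2 := hψ l j m2 (right_ne_zero_of_mul hne)
  have h3 : m1 + m2 = mm := Finset.HasAntidiagonal.mem_antidiagonal.mp hmem
  have : ((m1 : ℤ) + m2) = (mm : ℤ) := by exact_mod_cast congrArg (Nat.cast : ℕ → ℤ) h3
  linarith

/-- Homogeneity predicate for a single polynomial. -/
def Hom2 (d : ℤ) (p : R) : Prop := ∀ m : ℕ, p.coeff m ≠ 0 → 2 * (m : ℤ) = d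

lemma hom2_mul {d₁ d₂ : ℤ} {p q : R} (h1 : Hom2 d₁ p) (h2 : Hom2 d₂ q) :
    Hom2 (d₁ + d₂) (p * q) := by
  intro m hm
  rw [Polynomial.coeff_mul] at hm
  obtain ⟨⟨a, b⟩, hab, hne⟩ := Finset.exists_ne_zero_of_sum_ne_zero hm
  have ha := h1 a (left_ne_zero_of_mul hne)
  have hb := h2 b (right_ne_zero_of_mul hne)
  have hmem : a + b = m := Finset.HasAntidiagonal.mem_antidiagonal.mp hab
  have : ((a : ℤ) + b) = (m : ℤ) := by exact_mod_cast congrArg (Nat.cast : ℕ → ℤ) hmem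
  linarith

lemma hom2_one : Hom2 0 (1 : R) := by
  intro m hm
  rw [Polynomial.coeff_one] at hm
  have : m = 0 := by by_contra h; simp [h] at hm
  simp [this]

lemma hom2_prod {ι : Type*} (s : Finset ι) (p : ι → R) (d : ι → ℤ)
    (h : ∀ i ∈ s, Hom2 (d i) (p i)) : Hom2 (∑ i ∈ s, d i) (∏ i ∈ s, p i) := by
  classical
  induction s using Finset.induction_on with
  | empty => simpa using hom2_one
  | insert a s hni ih =>
    rw [Finset.sum_insert hni, Finset.prod_insert hni]
    exact hom2_mul (h a (Finset.mem_insert_self a s))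
      (ih fun i hi => h i (Finset.mem_insert_of_mem hi))

/-! #### Arrow structure of the standard complex -/

/-- `p` is the source of an `ω`-arrow. -/
def wOut (M : List ℤ) (p : ℕ) : Prop :=
  (p % 2 = 0 ∧ seqAt M p = -1) ∨ (p % 2 = 1 ∧ seqAt M (p - 1) = 1)

/-- `p` is the target of an `ω`-arrow. -/
def wIn (M : List ℤ) (p : ℕ) : Prop :=
  (p % 2 = 1 ∧ seqAt M (p - 1) = -1) ∨ (p % 2 = 0 ∧ seqAt M p = 1)

/-- `p` is the source of a `∂`-arrow. -/
def dOut (M : List ℤ) (p : ℕ) : Prop :=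
  (p % 2 = 1 ∧ seqAt M p < 0) ∨ (p % 2 = 0 ∧ 0 < p ∧ 0 < seqAt M (p - 1))

/-- `p` is the target of a `∂`-arrow. -/
def dIn (M : List ℤ) (p : ℕ) : Prop :=
  (p % 2 = 0 ∧ 0 < p ∧ seqAt M (p - 1) < 0) ∨ (p % 2 = 1 ∧ 0 < seqAt M p)

instance (M : List ℤ) (p : ℕ) : Decidable (wOut M p) := by unfold wOut; infer_instance
instance (M : List ℤ) (p : ℕ) : Decidable (wIn M p) := by unfold wIn; infer_instance
instance (M : List ℤ) (p : ℕ) : Decidable (dOut M p) := by unfold dOut; infer_instance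
instance (M : List ℤ) (p : ℕ) : Decidable (dIn M p) := by unfold dIn; infer_instance

/-- The other end of the `ω`-edge at `p`. -/
def nwf (p : ℕ) : ℕ := if p % 2 = 0 then p + 1 else p - 1

/-- The other end of the `∂`-edge at `p`. -/
def ndf (p : ℕ) : ℕ := if p % 2 = 1 then p + 1 else p - 1

/-- The `U`-power on the `∂`-arrow out of `p` (row form). -/
def pwr (M : List ℤ) (p : ℕ) : ℕ :=
  if p % 2 = 1 then (seqAt M p).natAbs else (seqAt M (p - 1)).natAbs

/-- The `U`-power on the `∂`-arrow into `p` (column form). -/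
def pwc (M : List ℤ) (p : ℕ) : ℕ :=
  if p % 2 = 0 then (seqAt M (p - 1)).natAbs else (seqAt M p).natAbs

lemma seqAt_eq_zero {M : List ℤ} {p : ℕ} (h : M.length ≤ p) : seqAt M p = 0 :=
  List.getD_eq_default _ _ h

lemma lt_of_seqAt_ne {M : List ℤ} {p : ℕ} (h : seqAt M p ≠ 0) : p < M.length := by
  by_contra hc
  exact h (seqAt_eq_zero (by omega))

lemma nwf_nwf (p : ℕ) : nwf (nwf p) = p := by unfold nwf; split_ifs <;> omega

lemma ndf_ndf (p : ℕ) : ndf (ndf p) = p := by unfold ndf; split_ifs <;> omega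

lemma nwf_inj {a b : ℕ} (h : nwf a = nwf b) : a = b := by
  unfold nwf at h; split_ifs at h <;> omega

lemma ndf_inj {a b : ℕ} (h : ndf a = ndf b) : a = b := by
  unfold ndf at h; split_ifs at h <;> omega

lemma wCoef_row (M : List ℤ) (i j : ℕ) :
    wCoef M i j = if wOut M i ∧ j = nwf i then 1 else 0 := by
  unfold wCoef wOut nwf
  split_ifs <;> first | rfl | omega

lemma dCoef_row (M : List ℤ) (i j : ℕ) :
    dCoef M i j = if dOut M i ∧ j = ndf i then Uu ^ pwr M i else 0 := by
  unfold dCoef dOut ndf pwr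
  split_ifs <;> first | rfl | omega

lemma wOut_iff (M : List ℤ) (i j : ℕ) :
    (wOut M i ∧ j = nwf i) ↔ (wIn M j ∧ i = nwf j) := by
  constructor
  · rintro ⟨hw, rfl⟩
    rcases hw with ⟨he, hv⟩ | ⟨ho, hv⟩
    · have h1 : nwf i = i + 1 := by unfold nwf; rw [if_pos he]
      rw [h1]
      refine ⟨Or.inl ⟨by omega, by rwa [Nat.add_sub_cancel]⟩, ?_⟩
      unfold nwf; rw [if_neg (by omega)]; omega
    · have h1 : nwf i = i - 1 := by unfold nwf; rw [if_neg (by omega)]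
      rw [h1]
      refine ⟨Or.inr ⟨by omega, ?_⟩, ?_⟩
      · rwa [show i - 1 = i - 1 from rfl]
      · unfold nwf; rw [if_pos (by omega)]; omega
  · rintro ⟨hw, rfl⟩
    rcases hw with ⟨ho, hv⟩ | ⟨he, hv⟩
    · have h1 : nwf j = j - 1 := by unfold nwf; rw [if_neg (by omega)]
      rw [h1]
      refine ⟨Or.inl ⟨by omega, by rwa [show j - 1 = j - 1 from rfl]⟩, ?_⟩
      unfold nwf; rw [if_pos (by omega)]; omega
    · have h1 : nwf j = j + 1 := by unfold nwf; rw [if_pos he]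
      rw [h1]
      refine ⟨Or.inr ⟨by omega, by rwa [Nat.add_sub_cancel]⟩, ?_⟩
      unfold nwf; rw [if_neg (by omega)]; omega

lemma dOut_iff (M : List ℤ) (i j : ℕ) :
    (dOut M i ∧ j = ndf i) ↔ (dIn M j ∧ i = ndf j) := by
  constructor
  · rintro ⟨hw, rfl⟩
    rcases hw with ⟨ho, hv⟩ | ⟨he, h0, hv⟩
    · have h1 : ndf i = i + 1 := by unfold ndf; rw [if_pos ho]
      rw [h1]
      refine ⟨Or.inl ⟨by omega, by omega, by rwa [Nat.add_sub_cancel]⟩, ?_⟩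
      unfold ndf; rw [if_neg (by omega)]; omega
    · have h1 : ndf i = i - 1 := by unfold ndf; rw [if_neg (by omega)]
      rw [h1]
      refine ⟨Or.inr ⟨by omega, hv⟩, ?_⟩
      unfold ndf; rw [if_pos (by omega)]; omega
  · rintro ⟨hw, rfl⟩
    rcases hw with ⟨he, h0, hv⟩ | ⟨ho, hv⟩
    · have h1 : ndf j = j - 1 := by unfold ndf; rw [if_neg (by omega)]
      rw [h1]
      refine ⟨Or.inl ⟨by omega, hv⟩, ?_⟩
      unfold ndf; rw [if_pos (by omega)]; omega
    · have h1 : ndf j = j + 1 := by unfold ndf; rw [if_pos ho]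
      rw [h1]
      refine ⟨Or.inr ⟨by omega, by omega, by rwa [Nat.add_sub_cancel]⟩, ?_⟩
      unfold ndf; rw [if_neg (by omega)]; omega

lemma pwr_pwc {M : List ℤ} {i : ℕ} (h : dOut M i) : pwc M (ndf i) = pwr M i := by
  rcases h with ⟨ho, -⟩ | ⟨he, h0, -⟩
  · have h1 : ndf i = i + 1 := by unfold ndf; rw [if_pos ho]
    rw [h1]; unfold pwc pwr
    rw [if_pos (by omega), if_pos ho, Nat.add_sub_cancel]
  · have h1 : ndf i = i - 1 := by unfold ndf; rw [if_neg (by omega)]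
    rw [h1]; unfold pwc pwr
    rw [if_neg (by omega), if_neg (by omega)]

lemma pwr_ndf_pwc {M : List ℤ} {j : ℕ} (h : dIn M j) : pwr M (ndf j) = pwc M j := by
  rcases h with ⟨he, h0, -⟩ | ⟨ho, -⟩
  · have h1 : ndf j = j - 1 := by unfold ndf; rw [if_neg (by omega)]
    rw [h1]; unfold pwr pwc
    rw [if_pos (by omega), if_pos he]
  · have h1 : ndf j = j + 1 := by unfold ndf; rw [if_pos ho]
    rw [h1]; unfold pwr pwc
    rw [if_neg (by omega), if_neg (by omega), Nat.add_sub_cancel]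

lemma wCoef_col (M : List ℤ) (i j : ℕ) :
    wCoef M i j = if wIn M j ∧ i = nwf j then 1 else 0 := by
  rw [wCoef_row]
  by_cases h : wOut M i ∧ j = nwf i
  · rw [if_pos h, if_pos ((wOut_iff M i j).mp h)]
  · rw [if_neg h, if_neg (fun hc => h ((wOut_iff M i j).mpr hc))]

lemma dCoef_col (M : List ℤ) (i j : ℕ) :
    dCoef M i j = if dIn M j ∧ i = ndf j then Uu ^ pwc M j else 0 := by
  rw [dCoef_row]
  by_cases h : dOut M i ∧ j = ndf i
  · rw [if_pos h, if_pos ((dOut_iff M i j).mp h)]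
    rw [h.2, pwr_pwc h.1]
  · rw [if_neg h, if_neg (fun hc => h ((dOut_iff M i j).mpr hc))]

lemma wOut_wIn {M : List ℤ} {p : ℕ} (h : wOut M p) : wIn M (nwf p) :=
  ((wOut_iff M p (nwf p)).mp ⟨h, rfl⟩).1

lemma wIn_wOut {M : List ℤ} {p : ℕ} (h : wIn M p) : wOut M (nwf p) := by
  have := (wOut_iff M (nwf p) p).mpr ⟨h, rfl⟩
  exact this.1

lemma dOut_dIn {M : List ℤ} {p : ℕ} (h : dOut M p) : dIn M (ndf p) :=
  ((dOut_iff M p (ndf p)).mp ⟨h, rfl⟩).1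

lemma dIn_dOut {M : List ℤ} {p : ℕ} (h : dIn M p) : dOut M (ndf p) := by
  have := (dOut_iff M (ndf p) p).mpr ⟨h, rfl⟩
  exact this.1

lemma wOut_lt {M : List ℤ} {p : ℕ} (hp : p < M.length + 1) (h : wOut M p) :
    nwf p < M.length + 1 := by
  rcases h with ⟨he, hv⟩ | ⟨ho, -⟩
  · have : p < M.length := lt_of_seqAt_ne (by omega)
    unfold nwf; rw [if_pos he]; omega
  · unfold nwf; rw [if_neg (by omega)]; omega

lemma wIn_lt {M : List ℤ} {p : ℕ} (hp : p < M.length + 1) (h : wIn M p) :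
    nwf p < M.length + 1 := by
  rcases h with ⟨ho, -⟩ | ⟨he, hv⟩
  · unfold nwf; rw [if_neg (by omega)]; omega
  · have : p < M.length := lt_of_seqAt_ne (by omega)
    unfold nwf; rw [if_pos he]; omega

lemma dOut_lt {M : List ℤ} {p : ℕ} (hp : p < M.length + 1) (h : dOut M p) :
    ndf p < M.length + 1 := by
  rcases h with ⟨ho, hv⟩ | ⟨he, -, -⟩
  · have : p < M.length := lt_of_seqAt_ne (by omega)
    unfold ndf; rw [if_pos ho]; omega
  · unfold ndf; rw [if_neg (by omega)]; omega

lemma dIn_lt {M : List ℤ} {p : ℕ} (hp : p < M.length + 1) (h : dIn M p) :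
    ndf p < M.length + 1 := by
  rcases h with ⟨he, -, -⟩ | ⟨ho, hv⟩
  · unfold ndf; rw [if_neg (by omega)]; omega
  · have : p < M.length := lt_of_seqAt_ne (by omega)
    unfold ndf; rw [if_pos ho]; omega

lemma wrole {M : List ℤ} (hM : StdParams M) {p : ℕ} (h : p < M.length) :
    wOut M p ∨ wIn M p := by
  rcases Nat.even_or_odd p with he | ho
  · have he' : p % 2 = 0 := Nat.even_iff.mp he
    have := hM.2 p h
    rw [if_pos he'] at this
    rcases this with h1 | h1
    · exact Or.inr (Or.inr ⟨he', h1⟩)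
    · exact Or.inl (Or.inl ⟨he', h1⟩)
  · have ho' : p % 2 = 1 := Nat.odd_iff.mp ho
    have hlt : p - 1 < M.length := by omega
    have := hM.2 (p - 1) hlt
    rw [if_pos (by omega)] at this
    rcases this with h1 | h1
    · exact Or.inl (Or.inr ⟨ho', h1⟩)
    · exact Or.inr (Or.inl ⟨ho', h1⟩)

lemma drole {M : List ℤ} (hM : StdParams M) {p : ℕ} (h0 : 0 < p) (hL : p ≤ M.length) :
    dOut M p ∨ dIn M p := by
  rcases Nat.even_or_odd p with he | ho
  · have he' : p % 2 = 0 := Nat.even_iff.mp he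
    have hlt : p - 1 < M.length := by omega
    have := hM.2 (p - 1) hlt
    rw [if_neg (by omega)] at this
    rcases this.lt_or_gt with h1 | h1
    · exact Or.inr (Or.inl ⟨he', h0, h1⟩)
    · exact Or.inl (Or.inr ⟨he', h0, h1⟩)
  · have ho' : p % 2 = 1 := Nat.odd_iff.mp ho
    have hlt : p < M.length := by
      have := hM.1; omega
    have := hM.2 p hlt
    rw [if_neg (by omega)] at this
    rcases this.lt_or_gt with h1 | h1
    · exact Or.inl (Or.inl ⟨ho', h1⟩)
    · exact Or.inr (Or.inr ⟨ho', h1⟩)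

lemma not_wOut_L {M : List ℤ} (hM : StdParams M) : ¬ wOut M M.length := by
  rintro (⟨-, hv⟩ | ⟨ho, -⟩)
  · rw [seqAt_eq_zero le_rfl] at hv; omega
  · have := hM.1; omega

lemma not_wIn_L {M : List ℤ} (hM : StdParams M) : ¬ wIn M M.length := by
  rintro (⟨ho, -⟩ | ⟨-, hv⟩)
  · have := hM.1; omega
  · rw [seqAt_eq_zero le_rfl] at hv; omega

lemma not_dOut_0 {M : List ℤ} : ¬ dOut M 0 := by
  rintro (⟨h, -⟩ | ⟨-, h, -⟩) <;> omega

lemma not_dIn_0 {M : List ℤ} : ¬ dIn M 0 := by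
  rintro (⟨-, h, -⟩ | ⟨h, -⟩) <;> omega

lemma pwr_pos {M : List ℤ} {p : ℕ} (h : dOut M p) : 0 < pwr M p := by
  rcases h with ⟨ho, hv⟩ | ⟨he, -, hv⟩
  · unfold pwr; rw [if_pos ho]; exact Int.natAbs_pos.mpr (by omega)
  · unfold pwr; rw [if_neg (by omega)]; exact Int.natAbs_pos.mpr (by omega)

lemma dCoef_coeff_zero (M : List ℤ) (i j : ℕ) : (dCoef M i j).coeff 0 = 0 := by
  rw [dCoef_row]
  split_ifs with h
  · have := pwr_pos h.1
    simp only [Uu, Polynomial.coeff_X_pow]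
    rw [if_neg (by omega)]
  · simp

end SplittingAux

section SplittingCore

open Finset

lemma Uu_ne_zero : (Uu : R) ≠ 0 := Polynomial.X_ne_zero

lemma Uu_pow_ne_zero (k : ℕ) : (Uu : R) ^ k ≠ 0 := pow_ne_zero k Uu_ne_zero

/-- The `ω`-edge flip as a map on `Fin n` (junk value outside range). -/
def fwf {n : ℕ} (p : Fin n) : Fin n := if h : nwf ↑p < n then ⟨nwf ↑p, h⟩ else p

/-- The `∂`-edge flip as a map on `Fin n` (junk value outside range). -/
def fdf {n : ℕ} (p : Fin n) : Fin n := if h : ndf ↑p < n then ⟨ndf ↑p, h⟩ else p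

lemma fwf_val {n : ℕ} {p : Fin n} (h : nwf ↑p < n) : ((fwf p : Fin n) : ℕ) = nwf ↑p := by
  simp [fwf, h]

lemma fdf_val {n : ℕ} {p : Fin n} (h : ndf ↑p < n) : ((fdf p : Fin n) : ℕ) = ndf ↑p := by
  simp [fdf, h]

lemma fwf_fwf {n : ℕ} {p : Fin n} (h : nwf ↑p < n) : fwf (fwf p) = p := by
  have h1 : ((fwf p : Fin n) : ℕ) = nwf ↑p := fwf_val h
  have h2 : nwf ↑(fwf p) < n := by rw [h1, nwf_nwf]; exact p.isLt
  exact Fin.ext (by rw [fwf_val h2, h1, nwf_nwf])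

lemma fdf_fdf {n : ℕ} {p : Fin n} (h : ndf ↑p < n) : fdf (fdf p) = p := by
  have h1 : ((fdf p : Fin n) : ℕ) = ndf ↑p := fdf_val h
  have h2 : ndf ↑(fdf p) < n := by rw [h1, ndf_ndf]; exact p.isLt
  exact Fin.ext (by rw [fdf_val h2, h1, ndf_ndf])

variable {M : List ℤ}

lemma sum_colW (v : Fin (M.length + 1) → R) (j : Fin (M.length + 1)) (hj : wIn M ↑j) :
    ∑ l : Fin (M.length + 1), v l * wCoef M ↑l ↑j = v (fwf j) := by
  have hr : nwf ↑j < M.length + 1 := wIn_lt j.isLt hj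
  rw [Fintype.sum_eq_single (fwf j) (fun b hb => ?_)]
  · rw [wCoef_col, if_pos ⟨hj, fwf_val hr⟩, mul_one]
  · rw [wCoef_col, if_neg, mul_zero]
    rintro ⟨-, hbv⟩
    exact hb (Fin.ext (hbv.trans (fwf_val hr).symm))

lemma sum_colW_neg (v : Fin (M.length + 1) → R) (j : Fin (M.length + 1)) (hj : ¬ wIn M ↑j) :
    ∑ l : Fin (M.length + 1), v l * wCoef M ↑l ↑j = 0 :=
  Finset.sum_eq_zero fun l _ => by rw [wCoef_col, if_neg (fun hc => hj hc.1), mul_zero]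

lemma sum_rowW (v : Fin (M.length + 1) → R) (i : Fin (M.length + 1)) (hi : wOut M ↑i) :
    ∑ l : Fin (M.length + 1), wCoef M ↑i ↑l * v l = v (fwf i) := by
  have hr : nwf ↑i < M.length + 1 := wOut_lt i.isLt hi
  rw [Fintype.sum_eq_single (fwf i) (fun b hb => ?_)]
  · rw [wCoef_row, if_pos ⟨hi, fwf_val hr⟩, one_mul]
  · rw [wCoef_row, if_neg, zero_mul]
    rintro ⟨-, hbv⟩
    exact hb (Fin.ext (hbv.trans (fwf_val hr).symm))

lemma sum_rowW_neg (v : Fin (M.length + 1) → R) (i : Fin (M.length + 1)) (hi : ¬ wOut M ↑i) :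
    ∑ l : Fin (M.length + 1), wCoef M ↑i ↑l * v l = 0 :=
  Finset.sum_eq_zero fun l _ => by rw [wCoef_row, if_neg (fun hc => hi hc.1), zero_mul]

lemma sum_colD (v : Fin (M.length + 1) → R) (j : Fin (M.length + 1)) (hj : dIn M ↑j) :
    ∑ l : Fin (M.length + 1), v l * dCoef M ↑l ↑j = v (fdf j) * Uu ^ pwc M ↑j := by
  have hr : ndf ↑j < M.length + 1 := dIn_lt j.isLt hj
  rw [Fintype.sum_eq_single (fdf j) (fun b hb => ?_)]
  · rw [dCoef_col, if_pos ⟨hj, fdf_val hr⟩]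
  · rw [dCoef_col, if_neg, mul_zero]
    rintro ⟨-, hbv⟩
    exact hb (Fin.ext (hbv.trans (fdf_val hr).symm))

lemma sum_colD_neg (v : Fin (M.length + 1) → R) (j : Fin (M.length + 1)) (hj : ¬ dIn M ↑j) :
    ∑ l : Fin (M.length + 1), v l * dCoef M ↑l ↑j = 0 :=
  Finset.sum_eq_zero fun l _ => by rw [dCoef_col, if_neg (fun hc => hj hc.1), mul_zero]

lemma sum_rowD (v : Fin (M.length + 1) → R) (i : Fin (M.length + 1)) (hi : dOut M ↑i) :
    ∑ l : Fin (M.length + 1), dCoef M ↑i ↑l * v l = Uu ^ pwr M ↑i * v (fdf i) := by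
  have hr : ndf ↑i < M.length + 1 := dOut_lt i.isLt hi
  rw [Fintype.sum_eq_single (fdf i) (fun b hb => ?_)]
  · rw [dCoef_row, if_pos ⟨hi, fdf_val hr⟩]
  · rw [dCoef_row, if_neg, zero_mul]
    rintro ⟨-, hbv⟩
    exact hb (Fin.ext (hbv.trans (fdf_val hr).symm))

lemma sum_rowD_neg (v : Fin (M.length + 1) → R) (i : Fin (M.length + 1)) (hi : ¬ dOut M ↑i) :
    ∑ l : Fin (M.length + 1), dCoef M ↑i ↑l * v l = 0 :=
  Finset.sum_eq_zero fun l _ => by rw [dCoef_row, if_neg (fun hc => hi hc.1), zero_mul]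

variable {P : Fin (M.length + 1) → Fin (M.length + 1) → R}

/-- Abbreviations for the three structural hypotheses. -/
abbrev HypD (M : List ℤ) (P : Fin (M.length + 1) → Fin (M.length + 1) → R) : Prop :=
  ∀ i j : Fin (M.length + 1), (∑ l : Fin (M.length + 1), P i l * dCoef M ↑l ↑j) = ∑ l : Fin (M.length + 1), dCoef M ↑i ↑l * P l j

abbrev HypW (M : List ℤ) (P : Fin (M.length + 1) → Fin (M.length + 1) → R) : Prop :=
  ∀ i j : Fin (M.length + 1), (∑ l : Fin (M.length + 1), P i l * wCoef M ↑l ↑j).coeff 0 = (∑ l : Fin (M.length + 1), wCoef M ↑i ↑l * P l j).coeff 0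

abbrev HypG (M : List ℤ) (P : Fin (M.length + 1) → Fin (M.length + 1) → R) : Prop :=
  ∀ (i j : Fin (M.length + 1)) (m : ℕ),
    (P i j).coeff m ≠ 0 → stdGr M ↑j - 2 * (m : ℤ) = stdGr M ↑i

lemma rule_w_out (hWc : HypW M P) {a b : Fin (M.length + 1)}
    (hQ : (P a b).coeff 0 ≠ 0) (hb : wOut M ↑b) :
    wOut M ↑a ∧ (P (fwf a) (fwf b)).coeff 0 ≠ 0 := by
  have hbr : nwf ↑b < M.length + 1 := wOut_lt b.isLt hb
  have hwin : wIn M ↑(fwf b) := by rw [fwf_val hbr]; exact wOut_wIn hb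
  have h1 := hWc a (fwf b)
  rw [sum_colW _ _ hwin, fwf_fwf hbr] at h1
  by_cases ha : wOut M ↑a
  · rw [sum_rowW _ _ ha] at h1
    exact ⟨ha, by rw [← h1]; exact hQ⟩
  · rw [sum_rowW_neg _ _ ha, Polynomial.coeff_zero] at h1
    exact absurd h1 hQ

lemma rule_w_in (hWc : HypW M P) {a b : Fin (M.length + 1)}
    (hQ : (P a b).coeff 0 ≠ 0) (ha : wIn M ↑a) :
    wIn M ↑b ∧ (P (fwf a) (fwf b)).coeff 0 ≠ 0 := by
  have har : nwf ↑a < M.length + 1 := wIn_lt a.isLt ha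
  have hout : wOut M ↑(fwf a) := by rw [fwf_val har]; exact wIn_wOut ha
  have h1 := hWc (fwf a) b
  rw [sum_rowW _ _ hout, fwf_fwf har] at h1
  by_cases hb : wIn M ↑b
  · rw [sum_colW _ _ hb] at h1
    exact ⟨hb, by rw [h1]; exact hQ⟩
  · rw [sum_colW_neg _ _ hb, Polynomial.coeff_zero] at h1
    exact absurd h1.symm hQ

lemma rule_d_out (hDc : HypD M P) {a b : Fin (M.length + 1)}
    (hP : P a b ≠ 0) (hb : dOut M ↑b) :
    dOut M ↑a ∧ P (fdf a) (fdf b) ≠ 0 := by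
  have hbr : ndf ↑b < M.length + 1 := dOut_lt b.isLt hb
  have hdin : dIn M ↑(fdf b) := by rw [fdf_val hbr]; exact dOut_dIn hb
  have h1 := hDc a (fdf b)
  rw [sum_colD _ _ hdin, fdf_fdf hbr] at h1
  have hne : P a b * Uu ^ pwc M ↑(fdf b) ≠ 0 := mul_ne_zero hP (Uu_pow_ne_zero _)
  by_cases ha : dOut M ↑a
  · rw [sum_rowD _ _ ha] at h1
    refine ⟨ha, fun hz => ?_⟩
    rw [h1, hz, mul_zero] at hne
    exact hne rfl
  · rw [sum_rowD_neg _ _ ha] at h1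
    exact absurd h1 hne

lemma rule_d_in (hDc : HypD M P) {a b : Fin (M.length + 1)}
    (hP : P a b ≠ 0) (ha : dIn M ↑a) :
    dIn M ↑b ∧ P (fdf a) (fdf b) ≠ 0 := by
  have har : ndf ↑a < M.length + 1 := dIn_lt a.isLt ha
  have hdo : dOut M ↑(fdf a) := by rw [fdf_val har]; exact dIn_dOut ha
  have h1 := hDc (fdf a) b
  rw [sum_rowD _ _ hdo, fdf_fdf har] at h1
  have hne : Uu ^ pwr M ↑(fdf a) * P a b ≠ 0 := mul_ne_zero (Uu_pow_ne_zero _) hP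
  by_cases hb : dIn M ↑b
  · rw [sum_colD _ _ hb] at h1
    refine ⟨hb, fun hz => ?_⟩
    rw [hz, zero_mul] at h1
    exact hne h1.symm
  · rw [sum_colD_neg _ _ hb] at h1
    exact absurd h1.symm hne

lemma q_gr (hHg : HypG M P) {a b : Fin (M.length + 1)} (hQ : (P a b).coeff 0 ≠ 0) :
    stdGr M ↑a = stdGr M ↑b := by
  have h := hHg a b 0 hQ
  push_cast at h
  linarith

lemma p_exists {a b : Fin (M.length + 1)} (hP : P a b ≠ 0) :
    ∃ m, (P a b).coeff m ≠ 0 := by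
  by_contra hc
  push_neg at hc
  exact hP (Polynomial.ext fun m => by rw [hc m, Polynomial.coeff_zero])

lemma p_le (hHg : HypG M P) {a b : Fin (M.length + 1)} (hP : P a b ≠ 0) :
    stdGr M ↑a ≤ stdGr M ↑b := by
  obtain ⟨m, hm⟩ := p_exists hP
  have h := hHg a b m hm
  have h2 : (0 : ℤ) ≤ (m : ℤ) := Int.natCast_nonneg m
  linarith

lemma p_q (hHg : HypG M P) {a b : Fin (M.length + 1)} (hP : P a b ≠ 0)
    (hg : stdGr M ↑a = stdGr M ↑b) : (P a b).coeff 0 ≠ 0 := by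
  obtain ⟨m, hm⟩ := p_exists hP
  have h := hHg a b m hm
  have : m = 0 := by omega
  rwa [this] at hm

/-! #### Cyclic propagation -/

lemma per_iter {α : Type*} (x : ℕ → α) (r : ℕ) (hper : ∀ t, x (t + r) = x t) :
    ∀ k t, x (t + k * r) = x t := by
  intro k
  induction k with
  | zero => intro t; simp
  | succ k ih =>
    intro t
    rw [show t + (k + 1) * r = (t + k * r) + r by ring, hper, ih]

lemma cyc_back {α : Type*} (x : ℕ → α) (r : ℕ) (hr : 0 < r) (hper : ∀ t, x (t + r) = x t)
    (p : α → Prop) (back : ∀ t, p (x (t + 1)) → p (x t)) {s : ℕ} (hs : p (x s)) :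
    ∀ u, p (x u) := by
  have down : ∀ d t, p (x (t + d)) → p (x t) := by
    intro d
    induction d with
    | zero => intro t h; simpa using h
    | succ d ih => intro t h; exact ih t (back (t + d) h)
  intro u
  have h1 : p (x (s + u * r)) := by rw [per_iter x r hper u s]; exact hs
  have h2 : u ≤ s + u * r := by
    have := Nat.le_mul_of_pos_right u hr
    omega
  have h3 := down (s + u * r - u) u
  rw [show u + (s + u * r - u) = s + u * r by omega] at h3
  exact h3 h1

lemma cyc_fwd {α : Type*} (x : ℕ → α) (r : ℕ) (hr : 0 < r) (hper : ∀ t, x (t + r) = x t)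
    (p : α → Prop) (fwd : ∀ t, p (x t) → p (x (t + 1))) {s : ℕ} (hs : p (x s)) :
    ∀ u, p (x u) := by
  have up : ∀ d, p (x (s + d)) := by
    intro d
    induction d with
    | zero => simpa using hs
    | succ d ih => exact fwd (s + d) ih
  intro u
  have h2 : s ≤ u + s * r := by
    have := Nat.le_mul_of_pos_right s hr
    omega
  have h3 := up (u + s * r - s)
  rw [show s + (u + s * r - s) = u + s * r by omega] at h3
  rwa [per_iter x r hper s u] at h3

lemma cyc_const (f : ℕ → ℤ) (r : ℕ) (hr : 0 < r) (hper : ∀ t, f (t + r) = f t)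
    (mono : ∀ t, f t ≤ f (t + 1)) : ∀ t, f t = f (t + 1) := by
  have le2 : ∀ d t, f t ≤ f (t + d) := by
    intro d
    induction d with
    | zero => intro t; simp
    | succ d ih =>
      intro t
      calc f t ≤ f (t + d) := ih t
        _ ≤ f (t + d + 1) := mono _
  intro t
  have h1 : f (t + 1) ≤ f (t + r) := by
    have := le2 (r - 1) (t + 1)
    rwa [show t + 1 + (r - 1) = t + r by omega] at this
  have h2 := hper t
  have h3 := mono t
  omega

/-! #### The walk -/

lemma contraL (hM : StdParams M) (hWc : HypW M P) (x : ℕ → Fin (M.length + 1)) (r : ℕ)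
    (hr : 0 < r) (hper : ∀ t, x (t + r) = x t)
    (hlink : ∀ t, (P (x t) (x (t + 1))).coeff 0 ≠ 0)
    (tq tL : ℕ) (hq : (↑(x tq) : ℕ) < M.length) (hL : (↑(x tL) : ℕ) = M.length) : False := by
  rcases wrole hM hq with h | h
  · have hall := cyc_back x r hr hper (fun v => wOut M ↑v)
      (fun t hv => (rule_w_out hWc (hlink t) hv).1) h
    have hc := hall tL; rw [hL] at hc; exact not_wOut_L hM hc
  · have hall := cyc_fwd x r hr hper (fun v => wIn M ↑v)
      (fun t hv => (rule_w_in hWc (hlink t) hv).1) h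
    have hc := hall tL; rw [hL] at hc; exact not_wIn_L hM hc

lemma contra0 (hDc : HypD M P) (x : ℕ → Fin (M.length + 1)) (r : ℕ)
    (hr : 0 < r) (hper : ∀ t, x (t + r) = x t)
    (hPlink : ∀ t, P (x t) (x (t + 1)) ≠ 0)
    (tq t0 : ℕ) (hq : dOut M ↑(x tq) ∨ dIn M ↑(x tq)) (h0 : (↑(x t0) : ℕ) = 0) : False := by
  rcases hq with h | h
  · have hall := cyc_back x r hr hper (fun v => dOut M ↑v)
      (fun t hv => (rule_d_out hDc (hPlink t) hv).1) h
    have hc := hall t0; rw [h0] at hc; exact not_dOut_0 hc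
  · have hall := cyc_fwd x r hr hper (fun v => dIn M ↑v)
      (fun t hv => (rule_d_in hDc (hPlink t) hv).1) h
    have hc := hall t0; rw [h0] at hc; exact not_dIn_0 hc

lemma walk (hM : StdParams M) (hDc : HypD M P) (hWc : HypW M P) (hHg : HypG M P) :
    ∀ (k : ℕ) (x : ℕ → Fin (M.length + 1)) (r : ℕ), 0 < r →
      (∀ t, x (t + r) = x t) →
      (∀ t, (P (x t) (x (t + 1))).coeff 0 ≠ 0) →
      ∀ ta tb, x ta ≠ x tb →
      ∀ tw, M.length ≤ (↑(x tw) : ℕ) + k → False := by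
  intro k
  induction k with
  | zero =>
    intro x r hr hper hlink ta tb hab tw hw
    have hL : (↑(x tw) : ℕ) = M.length := by have := (x tw).isLt; omega
    by_cases hta : (↑(x ta) : ℕ) = M.length
    · have h1 : (↑(x tb) : ℕ) ≠ M.length := fun hc => hab (Fin.ext (by rw [hta, hc]))
      exact contraL hM hWc x r hr hper hlink tb tw (by have := (x tb).isLt; omega) hL
    · exact contraL hM hWc x r hr hper hlink ta tw (by have := (x ta).isLt; omega) hL
  | succ k ih =>
    intro x r hr hper hlink ta tb hab tw hw
    by_cases hLex : ∃ t, (↑(x t) : ℕ) = M.length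
    · obtain ⟨tL, hL⟩ := hLex
      by_cases hta : (↑(x ta) : ℕ) = M.length
      · have h1 : (↑(x tb) : ℕ) ≠ M.length := fun hc => hab (Fin.ext (by rw [hta, hc]))
        exact contraL hM hWc x r hr hper hlink tb tL (by have := (x tb).isLt; omega) hL
      · exact contraL hM hWc x r hr hper hlink ta tL (by have := (x ta).isLt; omega) hL
    · push_neg at hLex
      have hall : ∀ t, (↑(x t) : ℕ) < M.length := fun t => by
        have := (x t).isLt; have := hLex t; omega
      rcases Nat.even_or_odd ((x tw : ℕ)) with hev | hod
      · -- ω-move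
        have hstep : (∀ u, wOut M ↑(x u)) ∨ (∀ u, wIn M ↑(x u)) := by
          by_cases hex : ∃ s, wOut M ↑(x s)
          · obtain ⟨s, hs⟩ := hex
            exact Or.inl (cyc_back x r hr hper (fun v => wOut M ↑v)
              (fun t hv => (rule_w_out hWc (hlink t) hv).1) hs)
          · push_neg at hex
            exact Or.inr fun u => (wrole hM (hall u)).resolve_left (hex u)
        have hrole : ∀ u, nwf ↑(x u) < M.length + 1 := by
          intro u
          rcases hstep with hout | hin
          · exact wOut_lt (x u).isLt (hout u)
          · exact wIn_lt (x u).isLt (hin u)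
        have hlink' : ∀ t, (P (fwf (x t)) (fwf (x (t + 1)))).coeff 0 ≠ 0 := by
          intro t
          rcases hstep with hout | hin
          · exact (rule_w_out hWc (hlink t) (hout (t + 1))).2
          · exact (rule_w_in hWc (hlink t) (hin t)).2
        have hper' : ∀ t, fwf (x (t + r)) = fwf (x t) := fun t => by rw [hper]
        have hab' : fwf (x ta) ≠ fwf (x tb) := fun hc => hab (Fin.ext (nwf_inj
          (by rw [← fwf_val (hrole ta), ← fwf_val (hrole tb), hc])))
        have hw' : M.length ≤ (↑(fwf (x tw)) : ℕ) + k := by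
          rw [fwf_val (hrole tw)]
          have : nwf ↑(x tw) = ↑(x tw) + 1 := by
            unfold nwf; rw [if_pos (Nat.even_iff.mp hev)]
          omega
        exact ih (fun t => fwf (x t)) r hr hper' hlink' ta tb hab' tw hw'
      · -- ∂-move
        have hodd : ((x tw : ℕ)) % 2 = 1 := Nat.odd_iff.mp hod
        have hPlink : ∀ t, P (x t) (x (t + 1)) ≠ 0 := fun t hz =>
          hlink t (by rw [hz]; exact Polynomial.coeff_zero 0)
        have hrole0 : dOut M ↑(x tw) ∨ dIn M ↑(x tw) :=
          drole hM (by omega) (by have := (x tw).isLt; omega)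
        by_cases h0ex : ∃ t, (↑(x t) : ℕ) = 0
        · obtain ⟨t0, h0⟩ := h0ex
          exact contra0 hDc x r hr hper hPlink tw t0 hrole0 h0
        · push_neg at h0ex
          have hpos : ∀ t, 0 < (↑(x t) : ℕ) := fun t => Nat.pos_of_ne_zero (h0ex t)
          have hstep : (∀ u, dOut M ↑(x u)) ∨ (∀ u, dIn M ↑(x u)) := by
            by_cases hex : ∃ s, dOut M ↑(x s)
            · obtain ⟨s, hs⟩ := hex
              exact Or.inl (cyc_back x r hr hper (fun v => dOut M ↑v)
                (fun t hv => (rule_d_out hDc (hPlink t) hv).1) hs)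
            · push_neg at hex
              exact Or.inr fun u =>
                (drole hM (hpos u) (by have := (x u).isLt; omega)).resolve_left (hex u)
          have hrole : ∀ u, ndf ↑(x u) < M.length + 1 := by
            intro u
            rcases hstep with hout | hin
            · exact dOut_lt (x u).isLt (hout u)
            · exact dIn_lt (x u).isLt (hin u)
          have hlinkP' : ∀ t, P (fdf (x t)) (fdf (x (t + 1))) ≠ 0 := by
            intro t
            rcases hstep with hout | hin
            · exact (rule_d_out hDc (hPlink t) (hout (t + 1))).2
            · exact (rule_d_in hDc (hPlink t) (hin t)).2
          have hper' : ∀ t, fdf (x (t + r)) = fdf (x t) := fun t => by rw [hper]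
          have hgr : ∀ t, stdGr M ↑(fdf (x t)) = stdGr M ↑(fdf (x (t + 1))) := by
            have hmono : ∀ t, stdGr M ↑(fdf (x t)) ≤ stdGr M ↑(fdf (x (t + 1))) :=
              fun t => p_le hHg (hlinkP' t)
            have hperg : ∀ t, stdGr M ↑(fdf (x (t + r))) = stdGr M ↑(fdf (x t)) := by
              intro t; rw [hper' t]
            exact cyc_const (fun t => stdGr M ↑(fdf (x t))) r hr hperg hmono
          have hlink' : ∀ t, (P (fdf (x t)) (fdf (x (t + 1)))).coeff 0 ≠ 0 :=
            fun t => p_q hHg (hlinkP' t) (hgr t)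
          have hab' : fdf (x ta) ≠ fdf (x tb) := fun hc => hab (Fin.ext (ndf_inj
            (by rw [← fdf_val (hrole ta), ← fdf_val (hrole tb), hc])))
          have hw' : M.length ≤ (↑(fdf (x tw)) : ℕ) + k := by
            rw [fdf_val (hrole tw)]
            have : ndf ↑(x tw) = ↑(x tw) + 1 := by
              unfold ndf; rw [if_pos hodd]
            omega
          exact ih (fun t => fdf (x t)) r hr hper' hlink' ta tb hab' tw hw'

/-! #### Diagonal entries -/

lemma step_w_out (hWc : HypW M P) {a : Fin (M.length + 1)} (ha : wOut M ↑a) :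
    (P a a).coeff 0 = (P (fwf a) (fwf a)).coeff 0 := by
  have har := wOut_lt a.isLt ha
  have h1 := hWc a (fwf a)
  rw [sum_colW _ _ (by rw [fwf_val har]; exact wOut_wIn ha), fwf_fwf har,
    sum_rowW _ _ ha] at h1
  exact h1

lemma step_w_in (hWc : HypW M P) {a : Fin (M.length + 1)} (ha : wIn M ↑a) :
    (P a a).coeff 0 = (P (fwf a) (fwf a)).coeff 0 := by
  have har := wIn_lt a.isLt ha
  have h1 := hWc (fwf a) a
  rw [sum_colW _ _ ha, sum_rowW _ _ (by rw [fwf_val har]; exact wIn_wOut ha),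
    fwf_fwf har] at h1
  exact h1.symm

lemma step_d_out (hDc : HypD M P) {a : Fin (M.length + 1)} (ha : dOut M ↑a) :
    P a a = P (fdf a) (fdf a) := by
  have har := dOut_lt a.isLt ha
  have h1 := hDc a (fdf a)
  rw [sum_colD _ _ (by rw [fdf_val har]; exact dOut_dIn ha), fdf_fdf har,
    sum_rowD _ _ ha] at h1
  have hpw : pwc M ↑(fdf a) = pwr M ↑a := by rw [fdf_val har]; exact pwr_pwc ha
  rw [hpw, mul_comm] at h1
  exact mul_left_cancel₀ (Uu_pow_ne_zero _) h1

lemma step_d_in (hDc : HypD M P) {a : Fin (M.length + 1)} (ha : dIn M ↑a) :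
    P a a = P (fdf a) (fdf a) := by
  have har := dIn_lt a.isLt ha
  have h1 := hDc (fdf a) a
  rw [sum_colD _ _ ha, sum_rowD _ _ (by rw [fdf_val har]; exact dIn_dOut ha),
    fdf_fdf har] at h1
  have hpw : pwr M ↑(fdf a) = pwc M ↑a := by rw [fdf_val har]; exact pwr_ndf_pwc ha
  rw [hpw, mul_comm] at h1
  exact (mul_left_cancel₀ (Uu_pow_ne_zero _) h1).symm

lemma diag (hM : StdParams M) (hDc : HypD M P) (hWc : HypW M P)
    (hQ00 : (P ⟨0, Nat.succ_pos M.length⟩ ⟨0, Nat.succ_pos M.length⟩).coeff 0 = 1) :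
    ∀ p : Fin (M.length + 1), (P p p).coeff 0 = 1 := by
  suffices h : ∀ (v : ℕ) (hv : v < M.length + 1), (P ⟨v, hv⟩ ⟨v, hv⟩).coeff 0 = 1 by
    intro p
    have := h ↑p p.isLt
    simpa using this
  intro v
  induction v with
  | zero => intro hv; exact hQ00
  | succ v ih =>
    intro hv
    have hv' : v < M.length + 1 := by omega
    have hvL : v < M.length := by omega
    have hprev := ih hv'
    rcases Nat.even_or_odd v with hev | hod
    · have he' : v % 2 = 0 := Nat.even_iff.mp hev
      have hflip : nwf (↑(⟨v, hv'⟩ : Fin (M.length + 1)) : ℕ) = v + 1 := by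
        show nwf v = v + 1
        unfold nwf; rw [if_pos he']
      have hfa : fwf (⟨v, hv'⟩ : Fin (M.length + 1)) = ⟨v + 1, hv⟩ :=
        Fin.ext (by rw [fwf_val (by rw [hflip]; exact hv), hflip])
      have hMv := hM.2 v hvL
      rw [if_pos he'] at hMv
      rcases hMv with h1 | h1
      · have hwin : wIn M (↑(⟨v, hv'⟩ : Fin (M.length + 1)) : ℕ) := Or.inr ⟨he', h1⟩
        rw [← hfa, ← step_w_in hWc hwin]
        exact hprev
      · have hwout : wOut M (↑(⟨v, hv'⟩ : Fin (M.length + 1)) : ℕ) := Or.inl ⟨he', h1⟩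
        rw [← hfa, ← step_w_out hWc hwout]
        exact hprev
    · have ho' : v % 2 = 1 := Nat.odd_iff.mp hod
      have hflip : ndf (↑(⟨v, hv'⟩ : Fin (M.length + 1)) : ℕ) = v + 1 := by
        show ndf v = v + 1
        unfold ndf; rw [if_pos ho']
      have hfa : fdf (⟨v, hv'⟩ : Fin (M.length + 1)) = ⟨v + 1, hv⟩ :=
        Fin.ext (by rw [fdf_val (by rw [hflip]; exact hv), hflip])
      have hMv := hM.2 v hvL
      rw [if_neg (by omega)] at hMv
      rcases hMv.lt_or_gt with h1 | h1
      · have hdout : dOut M (↑(⟨v, hv'⟩ : Fin (M.length + 1)) : ℕ) := Or.inl ⟨ho', h1⟩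
        rw [← hfa, ← step_d_out hDc hdout]
        exact hprev
      · have hdin : dIn M (↑(⟨v, hv'⟩ : Fin (M.length + 1)) : ℕ) := Or.inr ⟨ho', h1⟩
        rw [← hfa, ← step_d_in hDc hdin]
        exact hprev

/-! #### Determinant of the mod-U matrix -/

lemma detQ (hM : StdParams M) (hDc : HypD M P) (hWc : HypW M P) (hHg : HypG M P)
    (hQ00 : (P ⟨0, Nat.succ_pos M.length⟩ ⟨0, Nat.succ_pos M.length⟩).coeff 0 = 1) :
    (Matrix.of fun i j : Fin (M.length + 1) => (P i j).coeff 0).det = 1 := by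
  classical
  rw [Matrix.det_apply]
  rw [Finset.sum_eq_single (1 : Equiv.Perm (Fin (M.length + 1)))]
  · rw [Equiv.Perm.sign_one, one_smul]
    refine Finset.prod_eq_one fun i _ => ?_
    simpa using diag hM hDc hWc hQ00 i
  · intro σ _ hσ
    have hz : (∏ i, (Matrix.of fun i j : Fin (M.length + 1) => (P i j).coeff 0) (σ i) i) = 0 := by
      by_contra hprod
      have hfac : ∀ i : Fin (M.length + 1), (P (σ i) i).coeff 0 ≠ 0 := by
        intro i
        have := Finset.prod_ne_zero_iff.mp hprod i (Finset.mem_univ i)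
        simpa using this
      have hex : ∃ a, σ a ≠ a := by
        by_contra hc
        push_neg at hc
        exact hσ (Equiv.ext fun a => by rw [hc a]; rfl)
      obtain ⟨a, hane⟩ := hex
      have hstep : ∀ t : ℕ, (σ⁻¹ ^ t) a = σ ((σ⁻¹ ^ (t + 1)) a) := by
        intro t
        rw [pow_succ', Equiv.Perm.mul_apply]
        exact (Equiv.apply_symm_apply σ _).symm
      have hlink : ∀ t, (P ((σ⁻¹ ^ t) a) ((σ⁻¹ ^ (t + 1)) a)).coeff 0 ≠ 0 := by
        intro t
        rw [hstep t]
        exact hfac ((σ⁻¹ ^ (t + 1)) a)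
      have hper : ∀ t, (σ⁻¹ ^ (t + orderOf σ)) a = (σ⁻¹ ^ t) a := by
        intro t
        have h1 : σ⁻¹ ^ orderOf σ = 1 := by rw [inv_pow, pow_orderOf_eq_one, inv_one]
        rw [pow_add, h1, mul_one]
      have hab : (σ⁻¹ ^ (1 : ℕ)) a ≠ (σ⁻¹ ^ (0 : ℕ)) a := by
        rw [pow_one, pow_zero]
        intro hc
        simp only [Equiv.Perm.coe_one, id_eq] at hc
        exact hane (by nth_rewrite 1 [← hc]; exact Equiv.apply_symm_apply σ a)
      exact walk hM hDc hWc hHg M.length (fun t => (σ⁻¹ ^ t) a) (orderOf σ)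
        (orderOf_pos σ) hper hlink 1 0 hab 0 (by omega)
    rw [hz, smul_zero]
  · intro h
    exact absurd (Finset.mem_univ 1) h

end SplittingCore

set_option maxHeartbeats 2000000 in
/-- splitting theorem: if `f : C → A` and `g : A → C` are local
maps with `C` the standard complex of `A`, then `g ∘ f` is an isomorphism and
the short exact sequence `0 → C → A → A/im f → 0` splits (there is a linear
retraction of `f`). -/
theorem splitting (A : PreAI) (hA : IsAICplx A) (M : List ℤ) (hM : StdParams M)
    (f : V (M.length + 1) →ₗ[R] V A.n) (g : V A.n →ₗ[R] V (M.length + 1))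
    (hf : isLocalMap (symCplx M) A f) (hg : isLocalMap A (symCplx M) g) :
    Function.Bijective (g ∘ₗ f) ∧
    ∃ h : V A.n →ₗ[R] V (M.length + 1), h ∘ₗ f = LinearMap.id := by
  classical
  have twoF2 : ∀ z : F2, z + z = 0 := by decide
  -- chain-map facts
  have hfd : f ∘ₗ (symCplx M).d = A.d ∘ₗ f := hf.1.2.1
  have hgd : g ∘ₗ A.d = (symCplx M).d ∘ₗ g := hg.1.2.1
  have chainphi : (g ∘ₗ f) ∘ₗ (symCplx M).d = (symCplx M).d ∘ₗ (g ∘ₗ f) := by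
    exact LinearMap.ext fun x =>
      (congrArg g (LinearMap.congr_fun hfd x)).trans (LinearMap.congr_fun hgd (f x))
  -- reducedness of the standard complex
  have hdCmod : ∀ w : V (M.length + 1), modU ((symCplx M).toPreCplx.d w) := by
    intro w jj
    show ((ofMatrix (dCoef M) w) jj).coeff 0 = 0
    erw [ofMatrix_apply, Polynomial.finset_sum_coeff]
    exact Finset.sum_eq_zero fun l _ => by
      rw [Polynomial.mul_coeff_zero, dCoef_coeff_zero, mul_zero]
  -- gradedness hypothesis
  have hHg : HypG M (fun i j => ((g ∘ₗ f) (e i)) j) := by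
    intro i j m hc
    have h2 := homog_map g hg.1.1 (hf.1.1 i)
    have h4 : stdGr M (↑j : ℕ) - 2 * (m : ℤ) = stdGr M (↑i : ℕ) + 0 + 0 := h2 j m hc
    linarith
  -- d-commutation hypothesis
  have hDc : HypD M (fun i j => ((g ∘ₗ f) (e i)) j) := by
    intro i j
    show (∑ l : Fin (M.length + 1), ((g ∘ₗ f) (e i)) l * dCoef M ↑l ↑j)
        = ∑ l : Fin (M.length + 1), dCoef M ↑i ↑l * ((g ∘ₗ f) (e l)) j
    have h : (g ∘ₗ f) (ofMatrix (dCoef M) (e i)) j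
        = (ofMatrix (dCoef M) ((g ∘ₗ f) (e i))) j :=
      congrFun (LinearMap.congr_fun chainphi (e i)) j
    calc ∑ l : Fin (M.length + 1), ((g ∘ₗ f) (e i)) l * dCoef M ↑l ↑j
        = (ofMatrix (dCoef M) ((g ∘ₗ f) (e i))) j := (ofMatrix_apply _ _ _).symm
      _ = (g ∘ₗ f) (ofMatrix (dCoef M) (e i)) j := h.symm
      _ = ∑ l : Fin (M.length + 1), (ofMatrix (dCoef M) (e i)) l * ((g ∘ₗ f) (e l)) j :=
          map_apply_sum _ _ _
      _ = ∑ l : Fin (M.length + 1), dCoef M ↑i ↑l * ((g ∘ₗ f) (e l)) j :=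
          Finset.sum_congr rfl fun l _ => by rw [ofMatrix_e]
  -- ω-commutation mod U hypothesis
  obtain ⟨Hf, -, hfh⟩ := hf.1.2.2
  obtain ⟨Hg, -, hgh⟩ := hg.1.2.2
  have hWc : HypW M (fun i j => ((g ∘ₗ f) (e i)) j) := by
    intro i j
    have hA : ((g (f ((symCplx M).ι (e i)) + A.ι (f (e i)) + Hf ((symCplx M).d (e i))
        + A.d (Hf (e i)))) j).coeff 0 = 0 := modU_map g (hfh (e i)) j
    simp only [LinearMap.add_apply, LinearMap.comp_apply, map_add, Pi.add_apply,
      Polynomial.coeff_add] at hA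
    have hB : (g (A.ι (f (e i))) j + (symCplx M).ι (g (f (e i))) j + Hg (A.d (f (e i))) j
        + (symCplx M).d (Hg (f (e i))) j).coeff 0 = 0 := hgh (f (e i)) j
    simp only [LinearMap.add_apply, LinearMap.comp_apply, map_add, Pi.add_apply,
      Polynomial.coeff_add] at hB
    have hq3 : ((g (Hf ((symCplx M).toPreCplx.d (e i)))) j).coeff 0 = 0 :=
      (modU_map g (modU_map Hf (hdCmod (e i)))) j
    have hq4 : ((g (A.toPreCplx.d (Hf (e i)))) j).coeff 0 = 0 := by
      have hrw : g (A.toPreCplx.d (Hf (e i))) = (symCplx M).toPreCplx.d (g (Hf (e i))) := by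
        have h5 := LinearMap.congr_fun hgd (Hf (e i))
        exact h5
      rw [hrw]
      exact hdCmod (g (Hf (e i))) j
    have hr3 : ((Hg (A.toPreCplx.d (f (e i)))) j).coeff 0 = 0 := by
      have hrw : A.toPreCplx.d (f (e i)) = f ((symCplx M).toPreCplx.d (e i)) := by
        have h5 := LinearMap.congr_fun hfd (e i)
        exact h5.symm
      rw [hrw]
      exact (modU_map Hg (modU_map f (hdCmod (e i)))) j
    have hr4 : (((symCplx M).toPreCplx.d (Hg (f (e i)))) j).coeff 0 = 0 := hdCmod _ j
    have h2q : ((g (A.ι (f (e i)))) j).coeff 0 + ((g (A.ι (f (e i)))) j).coeff 0 = 0 :=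
      twoF2 _
    have key : ((g (f ((symCplx M).ι (e i)))) j).coeff 0
        + (((symCplx M).ι (g (f (e i)))) j).coeff 0 = 0 := by
      linear_combination hA + hB - h2q - hq3 - hq4 - hr3 - hr4
    -- expand S1 and S2
    have hS1 : (g (f ((symCplx M).ι (e i)))) j
        = ((g ∘ₗ f) (e i)) j
          + ∑ l : Fin (M.length + 1), wCoef M ↑i ↑l * ((g ∘ₗ f) (e l)) j := by
      have h1 : g (f ((symCplx M).ι (e i))) = (g ∘ₗ f) ((symCplx M).ι (e i)) := rfl
      rw [h1, map_apply_sum (g ∘ₗ f) ((symCplx M).ι (e i)) j]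
      have h2 : ∀ l : Fin (M.length + 1), ((symCplx M).ι (e i)) l = iCoef M ↑i ↑l :=
        fun l => ofMatrix_e (iCoef M) i l
      rw [Finset.sum_congr rfl (fun l _ => by rw [h2 l])]
      have h3 : ∀ l : Fin (M.length + 1),
          iCoef M ↑i ↑l = (if (↑i : ℕ) = ↑l then 1 else 0) + wCoef M ↑i ↑l := fun l => rfl
      rw [Finset.sum_congr rfl (fun l _ => by rw [h3 l, add_mul])]
      rw [Finset.sum_add_distrib]
      congr 1
      rw [Fintype.sum_eq_single i (fun b hb => ?_)]
      · rw [if_pos rfl, one_mul]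
      · rw [if_neg (fun hc => hb (Fin.ext hc.symm)), zero_mul]
    have hS2 : ((symCplx M).ι (g (f (e i)))) j
        = ((g ∘ₗ f) (e i)) j
          + ∑ l : Fin (M.length + 1), ((g ∘ₗ f) (e i)) l * wCoef M ↑l ↑j := by
      have h1 : ((symCplx M).ι (g (f (e i)))) j
          = ∑ l : Fin (M.length + 1), ((g ∘ₗ f) (e i)) l * iCoef M ↑l ↑j :=
        ofMatrix_apply (iCoef M) _ j
      rw [h1]
      have h3 : ∀ l : Fin (M.length + 1),
          iCoef M ↑l ↑j = (if (↑l : ℕ) = ↑j then 1 else 0) + wCoef M ↑l ↑j := fun l => rfl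
      rw [Finset.sum_congr rfl (fun l _ => by rw [h3 l, mul_add])]
      rw [Finset.sum_add_distrib]
      congr 1
      rw [Fintype.sum_eq_single j (fun b hb => ?_)]
      · rw [if_pos rfl, mul_one]
      · rw [if_neg (fun hc => hb (Fin.ext hc)), mul_zero]
    have kS1 : ((g (f ((symCplx M).ι (e i)))) j).coeff 0
        = (((g ∘ₗ f) (e i)) j).coeff 0
          + (∑ l : Fin (M.length + 1), wCoef M ↑i ↑l * ((g ∘ₗ f) (e l)) j).coeff 0 := by
      rw [hS1, Polynomial.coeff_add]
    have kS2 : (((symCplx M).ι (g (f (e i)))) j).coeff 0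
        = (((g ∘ₗ f) (e i)) j).coeff 0
          + (∑ l : Fin (M.length + 1), ((g ∘ₗ f) (e i)) l * wCoef M ↑l ↑j).coeff 0 := by
      rw [hS2, Polynomial.coeff_add]
    have h2S1 : ((g (f ((symCplx M).ι (e i)))) j).coeff 0
        + ((g (f ((symCplx M).ι (e i)))) j).coeff 0 = 0 := twoF2 _
    show (∑ l : Fin (M.length + 1), ((g ∘ₗ f) (e i)) l * wCoef M ↑l ↑j).coeff 0
        = (∑ l : Fin (M.length + 1), wCoef M ↑i ↑l * ((g ∘ₗ f) (e l)) j).coeff 0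
    linear_combination kS1 - kS2 + key - h2S1
  -- the anchor
  have hT0 : NontorsionClass (symCplx M).toPreCplx (e ⟨0, Nat.succ_pos M.length⟩) := by
    constructor
    · show (symCplx M).toPreCplx.d (e ⟨0, Nat.succ_pos M.length⟩) = 0
      refine funext fun (jj : Fin (M.length + 1)) => ?_
      show (ofMatrix (dCoef M) (e ⟨0, Nat.succ_pos M.length⟩)) jj = (0 : V (M.length + 1)) jj
      erw [ofMatrix_e, dCoef_row, if_neg (fun hc => not_dOut_0 hc.1)]
      simp
    · intro k hk
      obtain ⟨z, hz⟩ := hk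
      have h0 := congrFun hz ⟨0, Nat.succ_pos M.length⟩
      have hL : ((symCplx M).toPreCplx.d z) ⟨0, Nat.succ_pos M.length⟩ = 0 := by
        show (ofMatrix (dCoef M) z) ⟨0, Nat.succ_pos M.length⟩ = 0
        rw [ofMatrix_apply]
        refine Finset.sum_eq_zero fun l _ => ?_
        rw [dCoef_col, if_neg (fun hc => not_dIn_0 hc.1), mul_zero]
      have hR : ((Uu ^ k • e ⟨0, Nat.succ_pos M.length⟩ : V (M.length + 1)))
          ⟨0, Nat.succ_pos M.length⟩ = Uu ^ k := by
        rw [Pi.smul_apply]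
        show Uu ^ k • (if (⟨0, Nat.succ_pos M.length⟩ : Fin (M.length + 1))
          = ⟨0, Nat.succ_pos M.length⟩ then (1 : R) else 0) = Uu ^ k
        rw [if_pos rfl, smul_eq_mul, mul_one]
      erw [hL, hR] at h0
      exact Uu_pow_ne_zero k h0.symm
  have hNT : NontorsionClass (symCplx M).toPreCplx
      ((g ∘ₗ f) (e ⟨0, Nat.succ_pos M.length⟩)) :=
    hg.2 (f (e ⟨0, Nat.succ_pos M.length⟩)) (hf.2 (e ⟨0, Nat.succ_pos M.length⟩) hT0)
  have hQ00 : (((g ∘ₗ f) (e ⟨0, Nat.succ_pos M.length⟩)) ⟨0, Nat.succ_pos M.length⟩).coeff 0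
      = 1 := by
    by_contra hne
    have h0 : (((g ∘ₗ f) (e ⟨0, Nat.succ_pos M.length⟩))
        ⟨0, Nat.succ_pos M.length⟩).coeff 0 = 0 := by
      have hd : ∀ z : F2, z ≠ 1 → z = 0 := by decide
      exact hd _ hne
    set y : V (M.length + 1) := (g ∘ₗ f) (e ⟨0, Nat.succ_pos M.length⟩) with hydef
    have hy0 : y ⟨0, Nat.succ_pos M.length⟩ = 0 := by
      apply Polynomial.ext
      intro m
      rw [Polynomial.coeff_zero]
      by_contra hc
      have h5 := hHg ⟨0, Nat.succ_pos M.length⟩ ⟨0, Nat.succ_pos M.length⟩ m hc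
      have hm0 : m = 0 := by omega
      rw [hm0] at hc
      exact hc h0
    have hcyc : (symCplx M).toPreCplx.d y = 0 := hNT.1
    have hsrc : ∀ s : Fin (M.length + 1), dOut M ↑s → y s = 0 := by
      intro s hs
      have hr : ndf ↑s < M.length + 1 := dOut_lt s.isLt hs
      have h2 : ((symCplx M).toPreCplx.d y) (fdf s)
          = ∑ l : Fin (M.length + 1), y l * dCoef M ↑l ↑(fdf s) :=
        ofMatrix_apply (dCoef M) y (fdf s)
      have hh : (∑ l : Fin (M.length + 1), y l * dCoef M ↑l ↑(fdf s)) = 0 := by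
        rw [← h2, hcyc]
        simp
      rw [sum_colD y (fdf s) (by rw [fdf_val hr]; exact dOut_dIn hs), fdf_fdf hr] at hh
      rcases mul_eq_zero.mp hh with h5 | h5
      · exact h5
      · exact absurd h5 (Uu_pow_ne_zero _)
    set K : ℕ := ∑ p ∈ Finset.range (M.length + 1), pwc M p with hK
    have hKle : ∀ jj : Fin (M.length + 1), pwc M ↑jj ≤ K := fun jj =>
      Finset.single_le_sum (fun p _ => Nat.zero_le _) (Finset.mem_range.mpr jj.isLt)
    apply hNT.2 K
    set z : V (M.length + 1) :=
      (fun t => if dOut M ↑t then Uu ^ (K - pwr M ↑t) * y (fdf t) else 0) with hzdef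
    have hzval : ∀ t, z t = if dOut M ↑t then Uu ^ (K - pwr M ↑t) * y (fdf t) else 0 :=
      fun t => rfl
    refine ⟨z, ?_⟩
    refine funext fun (jj : Fin (M.length + 1)) => ?_
    show (ofMatrix (dCoef M) z) jj = ((Uu ^ K) • y) jj
    erw [ofMatrix_apply, Pi.smul_apply, smul_eq_mul]
    by_cases hjj : dIn M ↑jj
    · have hrjj : ndf ↑jj < M.length + 1 := dIn_lt jj.isLt hjj
      rw [sum_colD z jj hjj, hzval (fdf jj),
        if_pos (show dOut M ↑(fdf jj) by rw [fdf_val hrjj]; exact dIn_dOut hjj),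
        fdf_fdf hrjj]
      have hpw : pwr M ↑(fdf jj) = pwc M ↑jj := by
        rw [fdf_val hrjj]; exact pwr_ndf_pwc hjj
      rw [hpw, mul_right_comm, ← pow_add,
        show K - pwc M ↑jj + pwc M ↑jj = K from by have := hKle jj; omega]
    · rw [sum_colD_neg z jj hjj]
      by_cases hz0 : (↑jj : ℕ) = 0
      · have hjj0 : jj = ⟨0, Nat.succ_pos M.length⟩ := Fin.ext hz0
        rw [hjj0, hy0, mul_zero]
      · rcases drole hM (Nat.pos_of_ne_zero hz0)
          (by have h6 : (↑jj : ℕ) < M.length + 1 := jj.isLt; omega) with h5 | h5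
        · rw [hsrc jj h5, mul_zero]
        · exact absurd h5 hjj
  -- determinant is 1
  have hBmat : ∀ i j : Fin (M.length + 1),
      (LinearMap.toMatrix (Pi.basisFun R (Fin (M.length + 1)))
        (Pi.basisFun R (Fin (M.length + 1))) (g ∘ₗ f)) i j = ((g ∘ₗ f) (e j)) i := by
    intro i j
    rw [LinearMap.toMatrix_apply]
    have hbj : (Pi.basisFun R (Fin (M.length + 1))) j = e j := by
      rw [Pi.basisFun_apply]
      funext t
      rw [Pi.single_apply]
      rfl
    rw [Pi.basisFun_repr, hbj]
  have hdet : (LinearMap.toMatrix (Pi.basisFun R (Fin (M.length + 1)))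
      (Pi.basisFun R (Fin (M.length + 1))) (g ∘ₗ f)).det = 1 := by
    apply Polynomial.ext
    intro kk
    rcases Nat.eq_zero_or_pos kk with hk0 | hkpos
    · subst hk0
      rw [Polynomial.coeff_one, if_pos rfl]
      have hmap := RingHom.map_det (Polynomial.constantCoeff)
        (LinearMap.toMatrix (Pi.basisFun R (Fin (M.length + 1)))
          (Pi.basisFun R (Fin (M.length + 1))) (g ∘ₗ f))
      have hmm : ((LinearMap.toMatrix (Pi.basisFun R (Fin (M.length + 1)))
          (Pi.basisFun R (Fin (M.length + 1))) (g ∘ₗ f)).map Polynomial.constantCoeff)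
          = (Matrix.of fun i j : Fin (M.length + 1) =>
              (((g ∘ₗ f) (e i)) j).coeff 0).transpose := by
        ext i j
        rw [Matrix.map_apply, hBmat]
        rfl
      have hc0 : (LinearMap.toMatrix (Pi.basisFun R (Fin (M.length + 1)))
          (Pi.basisFun R (Fin (M.length + 1))) (g ∘ₗ f)).det.coeff 0
          = Polynomial.constantCoeff ((LinearMap.toMatrix (Pi.basisFun R (Fin (M.length + 1)))
          (Pi.basisFun R (Fin (M.length + 1))) (g ∘ₗ f)).det) := rfl
      rw [hc0, hmap, RingHom.mapMatrix_apply, hmm, Matrix.det_transpose]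
      exact detQ (P := fun i j => ((g ∘ₗ f) (e i)) j) hM hDc hWc hHg hQ00
    · rw [Polynomial.coeff_one, if_neg (by omega)]
      rw [Matrix.det_apply, Polynomial.finset_sum_coeff]
      refine Finset.sum_eq_zero fun sg _ => ?_
      rw [Units.smul_def, Polynomial.coeff_smul]
      have hz : (∏ i, (LinearMap.toMatrix (Pi.basisFun R (Fin (M.length + 1)))
          (Pi.basisFun R (Fin (M.length + 1))) (g ∘ₗ f)) (sg i) i).coeff kk = 0 := by
        by_contra hc
        have hH : ∀ i ∈ Finset.univ, Hom2 (stdGr M ↑(sg i) - stdGr M ↑i)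
            ((LinearMap.toMatrix (Pi.basisFun R (Fin (M.length + 1)))
              (Pi.basisFun R (Fin (M.length + 1))) (g ∘ₗ f)) (sg i) i) := by
          intro i _ m hm
          rw [hBmat] at hm
          have h5 := hHg i (sg i) m hm
          linarith
        have h2 := hom2_prod Finset.univ _ _ hH kk hc
        have h3 : ∑ i : Fin (M.length + 1), (stdGr M ↑(sg i) - stdGr M ↑i) = 0 := by
          rw [Finset.sum_sub_distrib, Equiv.sum_comp sg (fun i => stdGr M (↑i : ℕ))]
          ring
        rw [h3] at h2
        omega
      rw [hz, smul_zero]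
  have hunit : IsUnit (LinearMap.toMatrix (Pi.basisFun R (Fin (M.length + 1)))
      (Pi.basisFun R (Fin (M.length + 1))) (g ∘ₗ f)).det := by
    rw [hdet]; exact isUnit_one
  have hcoe : (LinearEquiv.ofIsUnitDet hunit : V (M.length + 1) →ₗ[R] V (M.length + 1))
      = g ∘ₗ f := LinearEquiv.coe_ofIsUnitDet hunit
  constructor
  · have hfun : ⇑(g ∘ₗ f) = ⇑(LinearEquiv.ofIsUnitDet hunit) := by
      funext x
      exact (LinearMap.congr_fun hcoe x).symm
    rw [hfun]
    exact (LinearEquiv.ofIsUnitDet hunit).bijective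
  · refine ⟨((LinearEquiv.ofIsUnitDet hunit).symm :
      V (M.length + 1) →ₗ[R] V (M.length + 1)) ∘ₗ g, ?_⟩
    apply LinearMap.ext
    intro x
    show (LinearEquiv.ofIsUnitDet hunit).symm (g (f x)) = x
    have h1 : g (f x) = (LinearEquiv.ofIsUnitDet hunit) x := by
      have h5 := LinearMap.congr_fun hcoe x
      simpa using h5.symm
    rw [h1]
    exact (LinearEquiv.ofIsUnitDet hunit).symm_apply_apply x

end AI
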